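/- arXiv:2201.05895 — 2 statements merged into one kernel-verified Lean document; each statement's English description precedes it below -/
import Mathlib

section
/- Let H be a hypergraph with vertices v_1,…,v_n and hyperedges e_1,…,e_m, and let Ω be its nilpotent hypergraph adjacency matrix with entries in 𝔷_n ⊗ 𝔦_m. Then for every integer k ≥ 1 and all indices 1 ≤ i ≠ j ≤ n, one has ζ_i · (Ω^k)_{ij} = Σ_{I,J} ω_{I,J} · ζ_I ⊗ ε_J, where the sum is over pairs of subsets I ⊆ {1,…,n} with |I| = k+1 and J ⊆ {1,…,m}, and ω_{I,J} is the number of k-paths in H from v_i to v_j whose set of visited vertices is {v_t : t ∈ I} and whose set of traversed hyperedges is {e_ℓ : ℓ ∈ J}. -/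
open Finset

/-- Regular-representation action of the zeon blade `ζ_I` (product of the zeon generators
`ζ_i`, `i ∈ I`, satisfying `ζ_i ^ 2 = 0`) on the coefficient space of the algebra
`𝔷 ⊗ 𝔦`:  a multiplication by `ζ_I` sends the basis blade indexed by `(S, T)` to the one
indexed by `(I ∪ S, T)` when `I` and `S` are disjoint, and to `0` otherwise. -/
noncomputable def zetaBlade (α γ : Type*) [DecidableEq α] (I : Finset α) :
    Module.End ℝ ((Finset α × γ) → ℝ) where
  toFun c := fun p => if I ⊆ p.1 then c (p.1 \ I, p.2) else 0
  map_add' x y := by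
    funext p
    by_cases h : I ⊆ p.1 <;> simp [h]
  map_smul' r x := by
    funext p
    by_cases h : I ⊆ p.1 <;> simp [h]

/-- Regular-representation action of the idem-Clifford blade `ε_J` (product of the
idempotent generators `ε_j`, `j ∈ J`, satisfying `ε_j ^ 2 = ε_j`) on the coefficient
space: multiplication by `ε_J` sends the basis blade indexed by `(S, T)` to the one
indexed by `(S, T ∪ J)`. -/
noncomputable def epsBlade (γ β : Type*) [DecidableEq β] (J : Finset β) :
    Module.End ℝ ((γ × Finset β) → ℝ) where
  toFun c := fun p => ∑ T ∈ p.2.powerset.filter (fun T => T ∪ J = p.2), c (p.1, T)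
  map_add' x y := by
    funext p
    simp [Finset.sum_add_distrib]
  map_smul' r x := by
    funext p
    simp [Finset.mul_sum]

/-- The nilpotent hypergraph adjacency matrix `Ω = X Z` of the hypergraph on vertices
`Fin n` whose hyperedges are `E 0, …, E (m-1)`:  `X i ℓ = ε_ℓ` if `v_i ∈ e_ℓ`
(and `0` otherwise), `Z ℓ j = ζ_j` if `v_j ∈ e_ℓ` (and `0` otherwise). -/
noncomputable def Omega {n m : ℕ} (E : Fin m → Finset (Fin n)) :
    Matrix (Fin n) (Fin n)
      (Module.End ℝ ((Finset (Fin n) × Finset (Fin m)) → ℝ)) :=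
  (Matrix.of fun (i : Fin n) (l : Fin m) =>
      if i ∈ E l then epsBlade (Finset (Fin n)) (Fin m) {l} else 0) *
  (Matrix.of fun (l : Fin m) (j : Fin n) =>
      if j ∈ E l then zetaBlade (Fin n) (Finset (Fin m)) {j} else 0)

/-- A `k`-walk in the hypergraph with hyperedges `E`: consecutive vertices are distinct
and both belong to the hyperedge used at that step. -/
def IsWalk {n m : ℕ} (E : Fin m → Finset (Fin n)) {k : ℕ}
    (vs : Fin (k + 1) → Fin n) (es : Fin k → Fin m) : Prop :=
  ∀ t : Fin k, vs t.castSucc ≠ vs t.succ ∧ vs t.castSucc ∈ E (es t) ∧ vs t.succ ∈ E (es t)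

section Aux

variable {α β γ X M : Type*}

lemma ite_sum_zero [AddCommMonoid M] (P : Prop) [Decidable P] (s : Finset X) (f : X → M) :
    (if P then ∑ x ∈ s, f x else 0) = ∑ x ∈ s, if P then f x else 0 := by
  split_ifs with h
  · rfl
  · simp

lemma zetaBlade_apply [DecidableEq α] (I S : Finset α) (c : (Finset α × γ) → ℝ) (T : γ) :
    zetaBlade α γ I c (S, T) = if I ⊆ S then c (S \ I, T) else 0 := rfl

lemma epsBlade_apply [DecidableEq β] (J : Finset β) (c : (γ × Finset β) → ℝ)
    (S : γ) (T : Finset β) :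
    epsBlade γ β J c (S, T) = ∑ U ∈ T.powerset.filter (fun U => U ∪ J = T), c (S, U) := rfl

lemma epsBlade_apply' [DecidableEq β] [Fintype β] (J : Finset β) (c : (γ × Finset β) → ℝ)
    (S : γ) (T : Finset β) :
    epsBlade γ β J c (S, T) = ∑ U ∈ Finset.univ.filter (fun U => U ∪ J = T), c (S, U) := by
  rw [epsBlade_apply]
  apply Finset.sum_congr _ (fun _ _ => rfl)
  ext U
  simp only [Finset.mem_filter, Finset.mem_powerset, Finset.mem_univ, true_and]
  constructor
  · tauto
  · intro h; exact ⟨h ▸ Finset.subset_union_left, h⟩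

lemma zetaBlade_mul [DecidableEq α] (I I' : Finset α) :
    zetaBlade α γ I * zetaBlade α γ I' =
      if Disjoint I I' then zetaBlade α γ (I ∪ I') else 0 := by
  classical
  apply LinearMap.ext; intro c
  funext p
  obtain ⟨S, T⟩ := p
  by_cases hd : Disjoint I I'
  · rw [if_pos hd]
    simp only [Module.End.mul_apply, zetaBlade_apply]
    have hss : (S \ I) \ I' = S \ (I ∪ I') := by
      ext x
      simp only [Finset.mem_sdiff, Finset.mem_union]
      tauto
    by_cases h : I ∪ I' ⊆ S
    · have h1 : I ⊆ S := (Finset.union_subset_iff.mp h).1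
      have h2 : I' ⊆ S \ I :=
        Finset.subset_sdiff.mpr ⟨(Finset.union_subset_iff.mp h).2, hd.symm⟩
      rw [if_pos h, if_pos h1, if_pos h2, hss]
    · rw [if_neg h]
      by_cases h1 : I ⊆ S
      · have h2 : ¬ I' ⊆ S \ I := fun h2 =>
          h (Finset.union_subset h1 ((Finset.subset_sdiff.mp h2).1))
        rw [if_pos h1, if_neg h2]
      · rw [if_neg h1]
  · rw [if_neg hd]
    simp only [Module.End.mul_apply, zetaBlade_apply]
    obtain ⟨x, hxI, hxI'⟩ := Finset.not_disjoint_iff.mp hd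
    by_cases h1 : I ⊆ S
    · have h2 : ¬ I' ⊆ S \ I := fun h2 => (Finset.mem_sdiff.mp (h2 hxI')).2 hxI
      rw [if_pos h1, if_neg h2]
      simp
    · rw [if_neg h1]
      simp

lemma epsBlade_mul [DecidableEq β] [Fintype β] (J J' : Finset β) :
    epsBlade γ β J * epsBlade γ β J' = epsBlade γ β (J ∪ J') := by
  classical
  apply LinearMap.ext; intro c
  funext p
  obtain ⟨S, T⟩ := p
  rw [Module.End.mul_apply]
  simp only [epsBlade_apply']
  simp only [Finset.sum_filter, _root_.ite_sum_zero]
  rw [Finset.sum_comm]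
  refine Finset.sum_congr rfl fun U _ => ?_
  refine (Finset.sum_eq_single (U ∪ J') ?_ ?_).trans ?_
  · intro b _ hb
    simp [Ne.symm hb]
  · simp
  · have hU : (U ∪ J') ∪ J = U ∪ (J ∪ J') := by
      ext x
      simp only [Finset.mem_union]
      tauto
    simp [hU]

lemma zeta_eps_comm [DecidableEq α] [DecidableEq β] (I : Finset α) (J : Finset β) :
    zetaBlade α (Finset β) I * epsBlade (Finset α) β J
      = epsBlade (Finset α) β J * zetaBlade α (Finset β) I := by
  apply LinearMap.ext; intro c
  funext p
  obtain ⟨S, T⟩ := p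
  rw [Module.End.mul_apply, Module.End.mul_apply, zetaBlade_apply, epsBlade_apply]
  by_cases h : I ⊆ S
  · rw [if_pos h, epsBlade_apply]
    refine Finset.sum_congr rfl fun U _ => ?_
    rw [zetaBlade_apply, if_pos h]
  · rw [if_neg h]
    exact (Finset.sum_eq_zero fun U _ => by rw [zetaBlade_apply, if_neg h]).symm

end Aux

section Blades

variable {n m : ℕ}

/-- The blade `ζ_I ε_J` as an endomorphism. -/
noncomputable def Blade {n m : ℕ} (I : Finset (Fin n)) (J : Finset (Fin m)) :
    Module.End ℝ ((Finset (Fin n) × Finset (Fin m)) → ℝ) :=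
  zetaBlade (Fin n) (Finset (Fin m)) I * epsBlade (Finset (Fin n)) (Fin m) J

lemma Blade_mul (I I' : Finset (Fin n)) (J J' : Finset (Fin m)) :
    Blade I J * Blade I' J' = if Disjoint I I' then Blade (I ∪ I') (J ∪ J') else 0 := by
  unfold Blade
  rw [mul_assoc, ← mul_assoc (epsBlade (Finset (Fin n)) (Fin m) J), ← zeta_eps_comm,
    mul_assoc, epsBlade_mul, ← mul_assoc, zetaBlade_mul]
  split_ifs with h
  · rfl
  · rw [zero_mul]

lemma zeta_mul_Blade (i : Fin n) (I : Finset (Fin n)) (J : Finset (Fin m)) :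
    zetaBlade (Fin n) (Finset (Fin m)) {i} * Blade I J =
      if i ∈ I then 0 else Blade (insert i I) J := by
  unfold Blade
  rw [← mul_assoc, zetaBlade_mul]
  by_cases h : i ∈ I
  · have hd : ¬ Disjoint {i} I := by simpa [Finset.disjoint_singleton_left] using h
    rw [if_pos h, if_neg hd, zero_mul]
  · have hd : Disjoint {i} I := by simpa [Finset.disjoint_singleton_left] using h
    rw [if_neg h, if_pos hd, show ({i} ∪ I) = insert i I by ext x; simp]

lemma Omega_apply (E : Fin m → Finset (Fin n)) (i j : Fin n) :
    Omega E i j = ∑ l : Fin m, if i ∈ E l ∧ j ∈ E l then Blade {j} {l} else 0 := by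
  rw [Omega, Matrix.mul_apply]
  refine Finset.sum_congr rfl fun l _ => ?_
  rw [Matrix.of_apply, Matrix.of_apply]
  by_cases h1 : i ∈ E l <;> by_cases h2 : j ∈ E l <;>
    simp [h1, h2, Blade, zeta_eps_comm]

end Blades

section Walks

attribute [local instance] Classical.propDecidable

variable {n m : ℕ}

/-- Walk condition for the tail of a walk starting at `i`: `w` lists the vertices after `i`,
`e` the hyperedges used. -/
def Cond (E : Fin m → Finset (Fin n)) (i j : Fin n) {k : ℕ}
    (w : Fin (k + 1) → Fin n) (e : Fin (k + 1) → Fin m) : Prop :=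
  Function.Injective w ∧ w (Fin.last k) = j ∧ i ∈ E (e 0) ∧ w 0 ∈ E (e 0) ∧
    ∀ t : Fin k, w t.castSucc ∈ E (e t.succ) ∧ w t.succ ∈ E (e t.succ)

lemma sum_fun_succ {M X : Type*} [AddCommMonoid M] [Fintype X] [DecidableEq X] (k : ℕ)
    (f : (Fin (k + 1) → X) → M) :
    ∑ g : Fin (k + 1) → X, f g = ∑ a : X, ∑ w : Fin k → X, f (Fin.cons a w) :=
  calc ∑ g : Fin (k + 1) → X, f g
      = ∑ p : X × (Fin k → X), f (Fin.cons p.1 p.2) :=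
        (Fintype.sum_equiv (Fin.consEquiv (fun _ => X)) _ _ (fun p => rfl)).symm
    _ = ∑ a : X, ∑ w : Fin k → X, f (Fin.cons a w) := Fintype.sum_prod_type _

lemma image_cons {X : Type*} [DecidableEq X] {k : ℕ} (a : X) (w : Fin k → X) :
    Finset.image (Fin.cons a w : Fin (k + 1) → X) Finset.univ
      = insert a (Finset.image w Finset.univ) := by
  ext x
  simp only [Finset.mem_image, Finset.mem_insert, Finset.mem_univ, true_and]
  constructor
  · rintro ⟨t, rfl⟩
    rcases Fin.eq_zero_or_eq_succ t with rfl | ⟨s, rfl⟩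
    · left; simp
    · right; exact ⟨s, by simp⟩
  · rintro (rfl | ⟨s, rfl⟩)
    · exact ⟨0, by simp⟩
    · exact ⟨s.succ, by simp⟩

lemma cond_cons_iff (E : Fin m → Finset (Fin n)) (i j a : Fin n) {k : ℕ}
    (w : Fin (k + 1) → Fin n) (e : Fin (k + 1) → Fin m) (l : Fin m) :
    Cond E i j (Fin.cons a w) (Fin.cons l e) ↔
      ((i ∈ E l ∧ a ∈ E l) ∧ Cond E a j w e ∧ a ∉ Finset.image w Finset.univ) := by
  have hmem : a ∉ Finset.image w Finset.univ ↔ a ∉ Set.range w := by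
    simp [Set.mem_range]
  rw [hmem]
  constructor
  · rintro ⟨hinj, hlast, hi, h0, hsteps⟩
    obtain ⟨hna, hinjw⟩ := Fin.cons_injective_iff.mp hinj
    refine ⟨⟨by simpa using hi, by simpa using h0⟩, ⟨hinjw, ?_, ?_, ?_, ?_⟩, hna⟩
    · rw [← Fin.succ_last] at hlast
      simpa using hlast
    · have := (hsteps 0).1
      simpa using this
    · have := (hsteps 0).2
      simpa using this
    · intro s
      have := hsteps s.succ
      rw [← Fin.succ_castSucc] at this
      simpa using this
  · rintro ⟨⟨hil, hal⟩, ⟨hinjw, hlast, ha0, hw0, hsteps⟩, hna⟩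
    refine ⟨Fin.cons_injective_iff.mpr ⟨hna, hinjw⟩, ?_, by simpa using hil,
      by simpa using hal, ?_⟩
    · rw [← Fin.succ_last]
      simpa using hlast
    · intro t
      refine Fin.cases ?_ (fun s => ?_) t
      · simpa using ⟨ha0, hw0⟩
      · have := hsteps s
        rw [← Fin.succ_castSucc]
        simpa using this

lemma pow_omega_apply (E : Fin m → Finset (Fin n)) (k : ℕ) :
    ∀ i j : Fin n,
      (Omega E ^ (k + 1)) i j =
        ∑ w : Fin (k + 1) → Fin n, ∑ e : Fin (k + 1) → Fin m,
          if Cond E i j w e then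
            Blade (Finset.image w Finset.univ) (Finset.image e Finset.univ) else 0 := by
  induction k with
  | zero =>
    intro i j
    rw [pow_one, Omega_apply,
      sum_fun_succ (f := fun w : Fin 1 → Fin n => ∑ e : Fin 1 → Fin m,
        if Cond E i j w e then
          Blade (Finset.image w Finset.univ) (Finset.image e Finset.univ) else 0)]
    have hcond : ∀ (a : Fin n) (l : Fin m),
        Cond E i j (Fin.cons a Fin.elim0) (Fin.cons l Fin.elim0) ↔
          (a = j ∧ i ∈ E l ∧ a ∈ E l) := by
      intro a l
      unfold Cond
      constructor
      · rintro ⟨-, hlast, hi, h0, -⟩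
        exact ⟨by simpa using hlast, by simpa using hi, by simpa using h0⟩
      · rintro ⟨rfl, hi, ha⟩
        exact ⟨fun x y _ => Fin.ext (by omega), by simp, by simpa using hi,
          by simpa using ha, fun t => t.elim0⟩
    have himg : ∀ a : Fin n,
        Finset.image (Fin.cons a Fin.elim0 : Fin 1 → Fin n) Finset.univ = {a} := by
      intro a
      rw [image_cons]
      simp
    have himge : ∀ l : Fin m,
        Finset.image (Fin.cons l Fin.elim0 : Fin 1 → Fin m) Finset.univ = {l} := by
      intro l
      rw [image_cons]
      simp
    have hR : ∀ a : Fin n,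
        (∑ w : Fin 0 → Fin n, ∑ e : Fin 1 → Fin m,
          if Cond E i j (Fin.cons a w) e then
            Blade (Finset.image (Fin.cons a w : Fin 1 → Fin n) Finset.univ)
              (Finset.image e Finset.univ) else 0)
        = ∑ l : Fin m, if a = j ∧ i ∈ E l ∧ a ∈ E l then Blade {a} {l} else 0 := by
      intro a
      rw [Fintype.sum_eq_single (Fin.elim0 : Fin 0 → Fin n)
        (fun w hw => absurd (Subsingleton.elim _ _) hw)]
      rw [sum_fun_succ (f := fun e : Fin 1 → Fin m =>
        if Cond E i j (Fin.cons a Fin.elim0) e then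
          Blade (Finset.image (Fin.cons a Fin.elim0 : Fin 1 → Fin n) Finset.univ)
            (Finset.image e Finset.univ) else 0)]
      refine Finset.sum_congr rfl fun l _ => ?_
      rw [Fintype.sum_eq_single (Fin.elim0 : Fin 0 → Fin m)
        (fun e he => absurd (Subsingleton.elim _ _) he)]
      rw [himg, himge]
      by_cases h : a = j ∧ i ∈ E l ∧ a ∈ E l
      · rw [if_pos ((hcond a l).mpr h), if_pos h]
      · rw [if_neg (fun hc => h ((hcond a l).mp hc)), if_neg h]
    rw [Finset.sum_congr rfl (fun a _ => hR a), Finset.sum_comm]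
    refine Finset.sum_congr rfl fun l _ => ?_
    rw [Finset.sum_eq_single j (fun a _ ha => if_neg (fun h => ha h.1))
      (fun h => absurd (Finset.mem_univ j) h)]
    simp
  | succ k ih =>
    intro i j
    rw [pow_succ', Matrix.mul_apply,
      sum_fun_succ (f := fun w : Fin (k + 2) → Fin n => ∑ e : Fin (k + 2) → Fin m,
        if Cond E i j w e then
          Blade (Finset.image w Finset.univ) (Finset.image e Finset.univ) else 0)]
    refine Finset.sum_congr rfl fun a _ => ?_
    rw [ih a j, Omega_apply, Finset.sum_mul]
    simp only [Finset.mul_sum]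
    rw [Finset.sum_comm]
    refine Finset.sum_congr rfl fun w _ => ?_
    rw [sum_fun_succ (f := fun e : Fin (k + 2) → Fin m =>
      if Cond E i j (Fin.cons a w) e then
        Blade (Finset.image (Fin.cons a w : Fin (k + 2) → Fin n) Finset.univ)
          (Finset.image e Finset.univ) else 0)]
    refine Finset.sum_congr rfl fun l _ => ?_
    refine Finset.sum_congr rfl fun e _ => ?_
    have hsa : ({a} : Finset (Fin n)) ∪ Finset.image w Finset.univ
        = insert a (Finset.image w Finset.univ) := by ext x; simp
    have hsl : ({l} : Finset (Fin m)) ∪ Finset.image e Finset.univ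
        = insert l (Finset.image e Finset.univ) := by ext x; simp
    by_cases h1 : i ∈ E l ∧ a ∈ E l
    · by_cases h2 : Cond E a j w e
      · by_cases h3 : a ∉ Finset.image w Finset.univ
        · have hc : Cond E i j (Fin.cons a w) (Fin.cons l e) :=
            (cond_cons_iff E i j a w e l).mpr ⟨h1, h2, h3⟩
          rw [if_pos h1, if_pos h2, if_pos hc, Blade_mul,
            if_pos (by simpa [Finset.disjoint_singleton_left] using h3),
            image_cons, image_cons, hsa, hsl]
        · push_neg at h3
          have hc : ¬ Cond E i j (Fin.cons a w) (Fin.cons l e) := fun hc =>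
            ((cond_cons_iff E i j a w e l).mp hc).2.2 h3
          rw [if_neg hc, if_pos h1, if_pos h2, Blade_mul, if_neg]
          simpa [Finset.disjoint_singleton_left] using h3
      · rw [if_neg h2, mul_zero,
          if_neg (fun hc => h2 ((cond_cons_iff E i j a w e l).mp hc).2.1)]
    · rw [if_neg h1, zero_mul,
        if_neg (fun hc => h1 ((cond_cons_iff E i j a w e l).mp hc).1)]

end Walks

section Final

attribute [local instance] Classical.propDecidable

variable {n m : ℕ}

lemma blade_eq (I : Finset (Fin n)) (J : Finset (Fin m)) :
    zetaBlade (Fin n) (Finset (Fin m)) I * epsBlade (Finset (Fin n)) (Fin m) J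
      = Blade I J := rfl

lemma walk_iff (E : Fin m → Finset (Fin n)) (i j : Fin n) {k' : ℕ}
    (w : Fin (k' + 1) → Fin n) (e : Fin (k' + 1) → Fin m) :
    (IsWalk E (Fin.cons i w) e ∧ (Fin.cons i w : Fin (k' + 2) → Fin n) (Fin.last (k' + 1)) = j ∧
      Function.Injective (Fin.cons i w : Fin (k' + 2) → Fin n)) ↔
    (Cond E i j w e ∧ i ∉ Finset.image w Finset.univ) := by
  have hmem : i ∉ Finset.image w Finset.univ ↔ i ∉ Set.range w := by
    simp [Set.mem_range]
  rw [hmem]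
  constructor
  · rintro ⟨hwalk, hlast, hinj⟩
    obtain ⟨hna, hinjw⟩ := Fin.cons_injective_iff.mp hinj
    refine ⟨⟨hinjw, ?_, ?_, ?_, ?_⟩, hna⟩
    · rw [← Fin.succ_last] at hlast
      simpa using hlast
    · have := (hwalk 0).2.1
      simpa using this
    · have := (hwalk 0).2.2
      simpa using this
    · intro s
      have := hwalk s.succ
      rw [← Fin.succ_castSucc] at this
      exact ⟨by simpa using this.2.1, by simpa using this.2.2⟩
  · rintro ⟨⟨hinjw, hlast, hi0, hw0, hsteps⟩, hna⟩
    have hinj : Function.Injective (Fin.cons i w : Fin (k' + 2) → Fin n) :=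
      Fin.cons_injective_iff.mpr ⟨hna, hinjw⟩
    refine ⟨?_, ?_, hinj⟩
    · intro t
      refine ⟨fun hxy => absurd (hinj hxy) (Fin.ne_of_lt (Fin.castSucc_lt_succ : t.castSucc < t.succ)), ?_⟩
      refine Fin.cases ?_ (fun s => ?_) t
      · exact ⟨by simpa using hi0, by simpa using hw0⟩
      · have := hsteps s
        rw [← Fin.succ_castSucc]
        exact ⟨by simpa using this.1, by simpa using this.2⟩
    · rw [← Fin.succ_last]
      simpa using hlast

/-- For a hypergraph `H` with `n` vertices and `m` (nonempty) hyperedges,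
for every `k ≥ 1` and `i ≠ j`,
`ζ_i · (Ω^k)_{ij} = Σ_{I,J} ω_{I,J} ζ_I ε_J`, the sum being over subsets `I` of the
vertex set with `|I| = k + 1` and subsets `J` of the hyperedge index set, where
`ω_{I,J}` is the number of `k`-paths from `v_i` to `v_j` with visited vertex set `I`
and traversed hyperedge set `J`. -/
theorem zeon_hypergraph_path_enumeration {n m : ℕ} (E : Fin m → Finset (Fin n))
    (hE : ∀ l : Fin m, (E l).Nonempty)
    (k : ℕ) (hk : 1 ≤ k) (i j : Fin n) (hij : i ≠ j) :
    zetaBlade (Fin n) (Finset (Fin m)) {i} * ((Omega E) ^ k) i j =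
      ∑ I ∈ (Finset.univ : Finset (Fin n)).powersetCard (k + 1),
        ∑ J ∈ (Finset.univ : Finset (Fin m)).powerset,
          (Nat.card {w : (Fin (k + 1) → Fin n) × (Fin k → Fin m) //
              IsWalk E w.1 w.2 ∧ w.1 0 = i ∧ w.1 (Fin.last k) = j ∧
              Function.Injective w.1 ∧
              Finset.image w.1 Finset.univ = I ∧ Finset.image w.2 Finset.univ = J}) •
            (zetaBlade (Fin n) (Finset (Fin m)) I * epsBlade (Finset (Fin n)) (Fin m) J) := by
  classical
  obtain ⟨k', rfl⟩ : ∃ k', k = k' + 1 := ⟨k - 1, by omega⟩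
  simp only [blade_eq]
  rw [pow_omega_apply E k' i j, Finset.mul_sum]
  simp only [Finset.mul_sum, mul_ite, mul_zero, zeta_mul_Blade]
  have step1 : (∑ w : Fin (k' + 1) → Fin n, ∑ e : Fin (k' + 1) → Fin m,
      if Cond E i j w e then
        (if i ∈ Finset.image w Finset.univ then 0 else
          Blade (insert i (Finset.image w Finset.univ)) (Finset.image e Finset.univ))
      else 0)
      = ∑ p ∈ Finset.univ.filter
          (fun p : (Fin (k' + 1) → Fin n) × (Fin (k' + 1) → Fin m) =>
            Cond E i j p.1 p.2 ∧ i ∉ Finset.image p.1 Finset.univ),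
          Blade (insert i (Finset.image p.1 Finset.univ)) (Finset.image p.2 Finset.univ) := by
    rw [Finset.sum_filter, ← Finset.univ_product_univ, Finset.sum_product]
    refine Finset.sum_congr rfl fun w _ => Finset.sum_congr rfl fun e _ => ?_
    by_cases h1 : Cond E i j w e
    · by_cases h2 : i ∈ Finset.image w Finset.univ
      · simp [h1, h2]
      · simp [h1, h2]
    · simp [h1]
  rw [step1]
  have hmaps : ∀ p ∈ Finset.univ.filter
      (fun p : (Fin (k' + 1) → Fin n) × (Fin (k' + 1) → Fin m) =>
        Cond E i j p.1 p.2 ∧ i ∉ Finset.image p.1 Finset.univ),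
      (insert i (Finset.image p.1 Finset.univ), Finset.image p.2 Finset.univ)
        ∈ (Finset.univ : Finset (Fin n)).powersetCard (k' + 1 + 1) ×ˢ
          (Finset.univ : Finset (Fin m)).powerset := by
    intro p hp
    obtain ⟨⟨hinj, -, -, -, -⟩, hni⟩ := (Finset.mem_filter.mp hp).2
    refine Finset.mem_product.mpr ⟨?_, Finset.mem_powerset.mpr (Finset.subset_univ _)⟩
    rw [Finset.mem_powersetCard_univ, Finset.card_insert_of_notMem hni,
      Finset.card_image_of_injective _ hinj, Finset.card_univ, Fintype.card_fin]
  rw [← Finset.sum_fiberwise_of_maps_to hmaps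
    (fun p => Blade (insert i (Finset.image p.1 Finset.univ)) (Finset.image p.2 Finset.univ)),
    Finset.sum_product]
  refine Finset.sum_congr rfl fun I hI => Finset.sum_congr rfl fun J hJ => ?_
  have hconst : ∀ p ∈ (Finset.univ.filter
      (fun p : (Fin (k' + 1) → Fin n) × (Fin (k' + 1) → Fin m) =>
        Cond E i j p.1 p.2 ∧ i ∉ Finset.image p.1 Finset.univ)).filter
      (fun p => (insert i (Finset.image p.1 Finset.univ), Finset.image p.2 Finset.univ)
        = (I, J)),
      Blade (insert i (Finset.image p.1 Finset.univ)) (Finset.image p.2 Finset.univ)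
        = Blade I J := by
    intro p hp
    have hIJ := (Finset.mem_filter.mp hp).2
    obtain ⟨h1, h2⟩ := Prod.mk.inj hIJ
    rw [h1, h2]
  rw [Finset.sum_congr rfl hconst, Finset.sum_const]
  congr 1
  rw [Nat.card_eq_fintype_card, Fintype.card_subtype]
  refine Finset.card_bij' (fun p (_ : p ∈ _) => ((Fin.cons i p.1 : Fin (k' + 2) → Fin n), p.2))
    (fun q (_ : q ∈ _) => (Fin.tail q.1, q.2)) ?_ ?_ ?_ ?_
  · intro p hp
    obtain ⟨hp1, hIJ⟩ := Finset.mem_filter.mp hp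
    obtain ⟨-, hPp⟩ := Finset.mem_filter.mp hp1
    obtain ⟨hwalk, hlast, hinj⟩ := (walk_iff E i j p.1 p.2).mpr hPp
    obtain ⟨hI1, hJ1⟩ := Prod.mk.inj hIJ
    refine Finset.mem_filter.mpr ⟨Finset.mem_univ _, hwalk, by simp, hlast, hinj, ?_, hJ1⟩
    rw [image_cons]
    exact hI1
  · intro q hq
    obtain ⟨-, hwalk, h0, hlast, hinj, hIimg, hJimg⟩ := Finset.mem_filter.mp hq
    have hq1 : (Fin.cons i (Fin.tail q.1) : Fin (k' + 2) → Fin n) = q.1 := by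
      rw [← h0]
      exact Fin.cons_self_tail q.1
    have hPp : Cond E i j (Fin.tail q.1) q.2 ∧ i ∉ Finset.image (Fin.tail q.1) Finset.univ := by
      refine (walk_iff E i j (Fin.tail q.1) q.2).mp ?_
      rw [hq1]
      exact ⟨hwalk, hlast, hinj⟩
    refine Finset.mem_filter.mpr ⟨Finset.mem_filter.mpr ⟨Finset.mem_univ _, hPp⟩, ?_⟩
    have himg : insert i (Finset.image (Fin.tail q.1) Finset.univ)
        = Finset.image q.1 Finset.univ := by
      rw [← image_cons, hq1]
    rw [himg, hIimg, hJimg]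
  · intro p hp
    dsimp only
    rw [show (Fin.tail (Fin.cons i p.1 : Fin (k' + 2) → Fin n)) = p.1 from
      funext fun t => by simp [Fin.tail]]
  · intro q hq
    dsimp only
    obtain ⟨-, -, h0, -⟩ := Finset.mem_filter.mp hq
    rw [← h0, Fin.cons_self_tail]



end Final
end

section
/- Let H = (V,E) be a hypergraph and j ≥ 0. Let G_j be the simple graph whose vertex set is the hyperedge set E of H, with two hyperedges adjacent in G_j if and only if their intersection contains at least j+1 vertices, and let Φ_{G_j} be the zeon independent-set representation of G_j. Then for every k ∈ ℕ, Φ_{G_j}^k = k! · Σ_S ζ_{N(S)} ⊗ ε_S, where the sum is over all k-element subsets S ⊆ E that are j-intersecting matchings of H (i.e. |e ∩ f| ≤ j for all distinct e, f ∈ S), N(S) is the set of edges of G_j'' incident with S, and ε_S = ∏_{e∈S} ε_e. In particular, the index sets of nonzero ε_S-terms of Φ_{G_j}^k are exactly the j-intersecting matchings of H on k hyperedges. -/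
open Finset

/-- The graph `G_j` on the hyperedge set of `H`: two (distinct) hyperedges are adjacent
iff their intersection contains at least `j + 1` vertices. -/
def interGraph {n m : ℕ} (E : Fin m → Finset (Fin n)) (j : ℕ) : SimpleGraph (Fin m) where
  Adj a b := a ≠ b ∧ j + 1 ≤ (E a ∩ E b).card
  symm := by
    constructor
    intro a b h
    exact ⟨h.1.symm, by rw [Finset.inter_comm]; exact h.2⟩
  loopless := by
    constructor
    intro a h
    exact h.1 rfl

/-- The zeon independent-set representation `Φ_G = Σ_w ψ(w) ⊗ ε_w` of a graph on vertex
set `Fin m`, where `E''` is the edge set of `G''` (the graph `G` with a loop added at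
each isolated vertex) and `ψ(w) = ∏_{e ∈ E'', w ∈ e} ζ_e`. -/
noncomputable def PhiInd {m : ℕ} (E'' : Finset (Sym2 (Fin m))) :
    Module.End ℝ ((Finset (Sym2 (Fin m)) × Finset (Fin m)) → ℝ) :=
  ∑ w : Fin m,
    zetaBlade (Sym2 (Fin m)) (Finset (Fin m)) (E''.filter (fun e => w ∈ e)) *
      epsBlade (Finset (Sym2 (Fin m))) (Fin m) {w}

open scoped Classical

section Blades
variable {α β : Type*} [DecidableEq α] [DecidableEq β]

lemma zeta_apply (γ : Type*) (I : Finset α) (c : (Finset α × γ) → ℝ) (p : Finset α × γ) :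
    zetaBlade α γ I c p = if I ⊆ p.1 then c (p.1 \ I, p.2) else 0 := rfl

lemma eps_apply (γ : Type*) (J : Finset β) (c : (γ × Finset β) → ℝ) (p : γ × Finset β) :
    epsBlade γ β J c p = ∑ T ∈ p.2.powerset.filter (fun T => T ∪ J = p.2), c (p.1, T) := rfl

lemma zeta_mul_zeta (γ : Type*) (I I' : Finset α) :
    zetaBlade α γ I * zetaBlade α γ I' =
      if Disjoint I I' then zetaBlade α γ (I ∪ I') else 0 := by
  by_cases hd : Disjoint I I'
  · rw [if_pos hd]
    refine LinearMap.ext fun c => funext fun p => ?_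
    rw [Module.End.mul_apply, zeta_apply, zeta_apply]
    by_cases h1 : I ⊆ p.1
    · by_cases h2 : I' ⊆ p.1
      · rw [if_pos h1, zeta_apply, if_pos (Finset.subset_sdiff.mpr ⟨h2, hd.symm⟩),
          if_pos (Finset.union_subset h1 h2)]
        simp [sdiff_sdiff]
      · rw [if_pos h1, zeta_apply,
          if_neg (fun h => h2 (h.trans (Finset.sdiff_subset))),
          if_neg (fun h => h2 ((Finset.subset_union_right).trans h))]
    · rw [if_neg h1, zeta_apply, if_neg (fun h => h1 ((Finset.subset_union_left).trans h))]
  · rw [if_neg hd]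
    refine LinearMap.ext fun c => funext fun p => ?_
    rw [Module.End.mul_apply, zeta_apply]
    have h2 : ¬ I' ⊆ p.1 \ I := fun h => hd ((Finset.subset_sdiff.mp h).2.symm)
    by_cases h1 : I ⊆ p.1
    · rw [if_pos h1, zeta_apply, if_neg h2]; rfl
    · rw [if_neg h1]; rfl

lemma eps_mul_eps (γ : Type*) (J J' : Finset β) :
    epsBlade γ β J * epsBlade γ β J' = epsBlade γ β (J ∪ J') := by
  refine LinearMap.ext fun c => funext fun p => ?_
  rw [Module.End.mul_apply, eps_apply, eps_apply]
  simp only [eps_apply]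
  rw [Finset.sum_sigma']
  refine Finset.sum_bij' (fun x _ => x.2) (fun T' _ => ⟨T' ∪ J', T'⟩) ?_ ?_ ?_ ?_ ?_
  · rintro ⟨T, T'⟩ hx
    simp only [Finset.mem_sigma, Finset.mem_filter, Finset.mem_powerset] at hx ⊢
    obtain ⟨⟨hT1, hT2⟩, hT'1, hT'2⟩ := hx
    constructor
    · exact (hT'1.trans hT1)
    · rw [← Finset.union_assoc, Finset.union_right_comm, hT'2, hT2]
  · intro T' hT'
    simp only [Finset.mem_filter, Finset.mem_powerset] at hT'
    simp only [Finset.mem_sigma, Finset.mem_filter, Finset.mem_powerset]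
    have h2 : (T' ∪ J') ∪ J = p.2 := by
      rw [Finset.union_right_comm, Finset.union_assoc]; exact hT'.2
    exact ⟨⟨h2 ▸ Finset.subset_union_left, h2⟩, Finset.subset_union_left, trivial⟩
  · rintro ⟨T, T'⟩ hx
    simp only [Finset.mem_sigma, Finset.mem_filter, Finset.mem_powerset] at hx
    exact Sigma.ext (by simp [hx.2.2]) (by simp)
  · intro T' _; rfl
  · rintro ⟨T, T'⟩ _; rfl

end Blades

section Blades2
variable {α β : Type*} [DecidableEq α] [DecidableEq β]

lemma zeta_comm_eps (I : Finset α) (J : Finset β) :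
    zetaBlade α (Finset β) I * epsBlade (Finset α) β J
      = epsBlade (Finset α) β J * zetaBlade α (Finset β) I := by
  refine LinearMap.ext fun c => funext fun p => ?_
  rw [Module.End.mul_apply, Module.End.mul_apply, zeta_apply, eps_apply]
  simp only [eps_apply, zeta_apply]
  by_cases h : I ⊆ p.1 <;> simp [h]

lemma zeta_empty (γ : Type*) : zetaBlade α γ (∅ : Finset α) = 1 := by
  refine LinearMap.ext fun c => funext fun p => ?_
  rw [zeta_apply]
  simp

lemma eps_empty (γ : Type*) : epsBlade γ β (∅ : Finset β) = 1 := by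
  refine LinearMap.ext fun c => funext fun p => ?_
  rw [eps_apply]
  rw [show Finset.filter (fun T => T ∪ ∅ = p.2) p.2.powerset = {p.2} by
    ext T; simp [Finset.mem_powerset, subset_antisymm_iff, and_comm]]
  simp

lemma blade_mul (I I' : Finset α) (J J' : Finset β) :
    (zetaBlade α (Finset β) I * epsBlade (Finset α) β J) *
      (zetaBlade α (Finset β) I' * epsBlade (Finset α) β J') =
    if Disjoint I I' then
      zetaBlade α (Finset β) (I ∪ I') * epsBlade (Finset α) β (J ∪ J')
    else 0 := by
  rw [mul_assoc, ← mul_assoc (epsBlade (Finset α) β J), ← zeta_comm_eps, mul_assoc,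
    ← mul_assoc, zeta_mul_zeta, eps_mul_eps]
  by_cases hd : Disjoint I I' <;> simp [hd]

lemma blade_apply_delta (I : Finset α) (J : Finset β) (q : Finset α × Finset β) :
    ((zetaBlade α (Finset β) I * epsBlade (Finset α) β J)
      (fun p => if p = ((∅ : Finset α), (∅ : Finset β)) then (1:ℝ) else 0)) q
      = if q = (I, J) then 1 else 0 := by
  rw [Module.End.mul_apply, zeta_apply]
  by_cases h : q = (I, J)
  · subst h
    rw [if_pos (by rfl : I ⊆ I), eps_apply, if_pos rfl]
    simp only [Finset.sdiff_self, Prod.mk.injEq, true_and]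
    rw [Finset.sum_ite_eq']
    simp
  · rw [if_neg h]
    by_cases h1 : I ⊆ q.1
    · rw [if_pos h1, eps_apply]
      refine Finset.sum_eq_zero fun T hT => ?_
      simp only [Finset.mem_filter, Finset.mem_powerset] at hT
      rw [if_neg]
      rintro heq
      obtain ⟨hq1, hT0⟩ := Prod.mk.injEq .. ▸ heq
      apply h
      have hq1' : q.1 = I := le_antisymm (Finset.sdiff_eq_empty_iff_subset.mp hq1) h1
      have hq2 : q.2 = J := by
        rw [← hT.2, hT0, Finset.empty_union]
      exact Prod.ext hq1' hq2
    · rw [if_neg h1]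


section Graph
variable {n m : ℕ} {E : Fin m → Finset (Fin n)} {j : ℕ} {E'' : Finset (Sym2 (Fin m))}

open scoped Classical

lemma mem_E''_adj (hE'' : E'' = Finset.univ.filter (fun e : Sym2 (Fin m) =>
      e ∈ (interGraph E j).edgeSet ∨
        ∃ a : Fin m, e = Sym2.diag a ∧ ∀ b : Fin m, ¬ (interGraph E j).Adj a b))
    {a b : Fin m} (h : (interGraph E j).Adj a b) : s(a, b) ∈ E'' := by
  rw [hE'', Finset.mem_filter]
  exact ⟨Finset.mem_univ _, Or.inl ((SimpleGraph.mem_edgeSet _).mpr h)⟩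

lemma adj_of_mem (hE'' : E'' = Finset.univ.filter (fun e : Sym2 (Fin m) =>
      e ∈ (interGraph E j).edgeSet ∨
        ∃ a : Fin m, e = Sym2.diag a ∧ ∀ b : Fin m, ¬ (interGraph E j).Adj a b)) :
    ∀ e ∈ E'', ∀ a b : Fin m, a ∈ e → b ∈ e → a ≠ b → (interGraph E j).Adj a b := by
  intro e
  induction e using Sym2.ind with
  | _ x y =>
    intro he a b ha hb hab
    rw [hE'', Finset.mem_filter] at he
    rcases he.2 with h | ⟨w, hw, -⟩
    · rw [SimpleGraph.mem_edgeSet] at h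
      rw [Sym2.mem_iff] at ha hb
      rcases ha with rfl | rfl <;> rcases hb with rfl | rfl
      · exact absurd rfl hab
      · exact h
      · exact h.symm
      · exact absurd rfl hab
    · exfalso
      rw [Sym2.diag, Sym2.eq_iff] at hw
      have hx : x = w := by tauto
      have hy : y = w := by tauto
      subst hx; subst hy
      rw [Sym2.mem_iff] at ha hb
      apply hab
      rcases ha with rfl | rfl <;> rcases hb with rfl | rfl <;> rfl

lemma psi_nonempty (hE'' : E'' = Finset.univ.filter (fun e : Sym2 (Fin m) =>
      e ∈ (interGraph E j).edgeSet ∨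
        ∃ a : Fin m, e = Sym2.diag a ∧ ∀ b : Fin m, ¬ (interGraph E j).Adj a b))
    (w : Fin m) : (E''.filter (fun e => w ∈ e)).Nonempty := by
  by_cases h : ∃ b, (interGraph E j).Adj w b
  · obtain ⟨b, hb⟩ := h
    exact ⟨s(w, b), Finset.mem_filter.mpr ⟨mem_E''_adj hE'' hb, Sym2.mem_mk_left _ _⟩⟩
  · push_neg at h
    refine ⟨Sym2.diag w, Finset.mem_filter.mpr ⟨?_, ?_⟩⟩
    · rw [hE'', Finset.mem_filter]
      exact ⟨Finset.mem_univ _, Or.inr ⟨w, rfl, h⟩⟩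
    · rw [Sym2.diag, Sym2.mem_iff]
      exact Or.inl rfl

lemma disj_iff (hE'' : E'' = Finset.univ.filter (fun e : Sym2 (Fin m) =>
      e ∈ (interGraph E j).edgeSet ∨
        ∃ a : Fin m, e = Sym2.diag a ∧ ∀ b : Fin m, ¬ (interGraph E j).Adj a b))
    (w : Fin m) (S : Finset (Fin m)) :
    Disjoint (E''.filter (fun e => w ∈ e)) (E''.filter (fun e => ∃ b ∈ S, b ∈ e)) ↔
      (w ∉ S ∧ ∀ b ∈ S, (E w ∩ E b).card ≤ j) := by
  constructor
  · intro hd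
    have hwS : w ∉ S := by
      intro hw
      obtain ⟨e, he⟩ := psi_nonempty hE'' w
      have he2 : e ∈ E''.filter (fun e => ∃ b ∈ S, b ∈ e) := by
        rw [Finset.mem_filter] at he ⊢
        exact ⟨he.1, w, hw, he.2⟩
      exact (Finset.disjoint_left.mp hd he) he2
    refine ⟨hwS, fun b hb => ?_⟩
    by_contra hcard
    push_neg at hcard
    have hwb : w ≠ b := fun h => hwS (h ▸ hb)
    have hadj : (interGraph E j).Adj w b := ⟨hwb, hcard⟩
    have he : s(w, b) ∈ E'' := mem_E''_adj hE'' hadj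
    exact (Finset.disjoint_left.mp hd
      (Finset.mem_filter.mpr ⟨he, Sym2.mem_mk_left _ _⟩))
      (Finset.mem_filter.mpr ⟨he, b, hb, Sym2.mem_mk_right _ _⟩)
  · rintro ⟨hwS, hcard⟩
    rw [Finset.disjoint_left]
    intro e he1 he2
    rw [Finset.mem_filter] at he1 he2
    obtain ⟨heE, hwe⟩ := he1
    obtain ⟨-, b, hb, hbe⟩ := he2
    have hwb : w ≠ b := fun h => hwS (h ▸ hb)
    have := adj_of_mem hE'' e heE w b hwe hbe hwb
    exact absurd this.2 (not_le.mpr (Nat.lt_succ_of_le (hcard b hb)))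

lemma nbr_union (w : Fin m) (S : Finset (Fin m)) :
    E''.filter (fun e => w ∈ e) ∪ E''.filter (fun e => ∃ b ∈ S, b ∈ e)
      = E''.filter (fun e => ∃ b ∈ insert w S, b ∈ e) := by
  rw [← Finset.filter_or]
  apply Finset.filter_congr
  intro e _
  simp [Finset.mem_insert, or_and_right, exists_or, exists_eq_left]

end Graph


open scoped Classical

/-- matching finsets -/
noncomputable def Mset {n m : ℕ} (E : Fin m → Finset (Fin n)) (j k : ℕ) :
    Finset (Finset (Fin m)) :=
  ((Finset.univ : Finset (Fin m)).powersetCard k).filter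
    (fun S => ∀ a ∈ S, ∀ b ∈ S, a ≠ b → (E a ∩ E b).card ≤ j)

/-- blade assigned to a vertex set -/
noncomputable def NB {m : ℕ} (E'' : Finset (Sym2 (Fin m))) (S : Finset (Fin m)) :
    Module.End ℝ ((Finset (Sym2 (Fin m)) × Finset (Fin m)) → ℝ) :=
  zetaBlade (Sym2 (Fin m)) (Finset (Fin m)) (E''.filter (fun e => ∃ w ∈ S, w ∈ e)) *
    epsBlade (Finset (Sym2 (Fin m))) (Fin m) S

lemma pow_formula {n m : ℕ} {E : Fin m → Finset (Fin n)} {j : ℕ}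
    {E'' : Finset (Sym2 (Fin m))}
    (hE'' : E'' = Finset.univ.filter (fun e : Sym2 (Fin m) =>
      e ∈ (interGraph E j).edgeSet ∨
        ∃ a : Fin m, e = Sym2.diag a ∧ ∀ b : Fin m, ¬ (interGraph E j).Adj a b))
    (k : ℕ) :
    PhiInd E'' ^ k = (Nat.factorial k) • ∑ S ∈ Mset E j k, NB E'' S := by
  induction k with
  | zero =>
    rw [pow_zero, Nat.factorial_zero, one_smul, Mset, Finset.powersetCard_zero,
      Finset.filter_singleton, if_pos (by simp), Finset.sum_singleton, NB,
      show E''.filter (fun e => ∃ w ∈ (∅ : Finset (Fin m)), w ∈ e) = ∅ from by simp,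
      zeta_empty, eps_empty, one_mul]
  | succ k ih =>
    rw [pow_succ', ih, mul_smul_comm, PhiInd, Finset.sum_mul_sum]
    have hstep : ∀ w : Fin m, ∀ S ∈ Mset E j k,
        (zetaBlade (Sym2 (Fin m)) (Finset (Fin m)) (E''.filter (fun e => w ∈ e)) *
          epsBlade (Finset (Sym2 (Fin m))) (Fin m) {w}) * NB E'' S
        = if w ∉ S ∧ ∀ b ∈ S, (E w ∩ E b).card ≤ j
          then NB E'' (insert w S) else 0 := by
      intro w S _
      rw [NB, NB, blade_mul]
      by_cases h : w ∉ S ∧ ∀ b ∈ S, (E w ∩ E b).card ≤ j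
      · rw [if_pos ((disj_iff hE'' w S).mpr h), if_pos h, nbr_union,
          ← Finset.insert_eq]
      · rw [if_neg (fun hd => h ((disj_iff hE'' w S).mp hd)), if_neg h]
    rw [Finset.sum_comm]
    rw [Finset.sum_congr rfl (fun S hS => Finset.sum_congr rfl (fun w _ => hstep w S hS))]
    have h1 : ∀ S ∈ Mset E j k,
        (∑ w : Fin m, if w ∉ S ∧ ∀ b ∈ S, (E w ∩ E b).card ≤ j
            then NB E'' (insert w S) else 0)
        = ∑ w ∈ Finset.univ.filter
            (fun w => w ∉ S ∧ ∀ b ∈ S, (E w ∩ E b).card ≤ j), NB E'' (insert w S) :=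
      fun S _ => (Finset.sum_filter _ _).symm
    rw [Finset.sum_congr rfl h1, Finset.sum_sigma']
    have hbij : ∑ x ∈ (Mset E j k).sigma
          (fun S => Finset.univ.filter
            (fun w => w ∉ S ∧ ∀ b ∈ S, (E w ∩ E b).card ≤ j)),
          NB E'' (insert x.2 x.1)
        = ∑ S' ∈ Mset E j (k + 1), ∑ _w ∈ S', NB E'' S' := by
      rw [Finset.sum_sigma']
      refine Finset.sum_bij' (fun x _ => ⟨insert x.2 x.1, x.2⟩)
        (fun x _ => ⟨x.1.erase x.2, x.2⟩) ?_ ?_ ?_ ?_ ?_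
      · rintro ⟨S, w⟩ hx
        simp only [Finset.mem_sigma, Mset, Finset.mem_filter,
          Finset.mem_powersetCard_univ, Finset.mem_univ, true_and] at hx ⊢
        obtain ⟨⟨hcard, hmatch⟩, hw, hcomp⟩ := hx
        refine ⟨⟨?_, ?_⟩, Finset.mem_insert_self _ _⟩
        · rw [Finset.card_insert_of_notMem hw, hcard]
        · intro a ha b hb hab
          rcases Finset.mem_insert.mp ha with rfl | ha' <;>
            rcases Finset.mem_insert.mp hb with rfl | hb'
          · exact absurd rfl hab
          · exact hcomp b hb'
          · rw [Finset.inter_comm]; exact hcomp a ha'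
          · exact hmatch a ha' b hb' hab
      · rintro ⟨S', w⟩ hx
        simp only [Finset.mem_sigma, Mset, Finset.mem_filter,
          Finset.mem_powersetCard_univ, Finset.mem_univ, true_and] at hx ⊢
        obtain ⟨⟨hcard, hmatch⟩, hw⟩ := hx
        refine ⟨⟨?_, ?_⟩, Finset.notMem_erase _ _, ?_⟩
        · rw [Finset.card_erase_of_mem hw, hcard]; rfl
        · intro a ha b hb hab
          exact hmatch a (Finset.mem_of_mem_erase ha) b (Finset.mem_of_mem_erase hb) hab
        · intro b hb
          exact hmatch w hw b (Finset.mem_of_mem_erase hb)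
            (Finset.ne_of_mem_erase hb).symm
      · rintro ⟨S, w⟩ hx
        simp only [Finset.mem_sigma, Finset.mem_filter] at hx
        exact Sigma.ext (by simp [Finset.erase_insert hx.2.2.1]) (by simp)
      · rintro ⟨S', w⟩ hx
        simp only [Finset.mem_sigma] at hx
        exact Sigma.ext (by simp [Finset.insert_erase hx.2]) (by simp)
      · rintro ⟨S, w⟩ _
        rfl
    rw [hbij]
    have h2 : ∀ S' ∈ Mset E j (k + 1),
        (∑ _w ∈ S', NB E'' S') = (k + 1) • NB E'' S' := by
      intro S' hS'
      rw [Finset.sum_const]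
      congr 1
      simp only [Mset, Finset.mem_filter, Finset.mem_powersetCard_univ] at hS'
      exact hS'.1
    rw [Finset.sum_congr rfl h2, ← Finset.smul_sum, smul_smul, Nat.factorial_succ,
      mul_comm]

lemma eval_formula {n m : ℕ} {E : Fin m → Finset (Fin n)} {j : ℕ}
    {E'' : Finset (Sym2 (Fin m))}
    (hE'' : E'' = Finset.univ.filter (fun e : Sym2 (Fin m) =>
      e ∈ (interGraph E j).edgeSet ∨
        ∃ a : Fin m, e = Sym2.diag a ∧ ∀ b : Fin m, ¬ (interGraph E j).Adj a b))
    (k : ℕ) (T : Finset (Sym2 (Fin m))) (S : Finset (Fin m)) :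
    (PhiInd E'' ^ k)
        (fun p => if p = ((∅ : Finset (Sym2 (Fin m))), (∅ : Finset (Fin m)))
          then (1 : ℝ) else 0) (T, S)
      = (Nat.factorial k : ℝ) * ∑ S₀ ∈ Mset E j k,
          (if (T, S) = (E''.filter (fun e => ∃ w ∈ S₀, w ∈ e), S₀) then (1:ℝ) else 0) := by
  rw [pow_formula hE'' k, LinearMap.smul_apply, Pi.smul_apply, LinearMap.sum_apply,
    Finset.sum_apply, nsmul_eq_mul]
  congr 1
  refine Finset.sum_congr rfl fun S₀ _ => ?_
  exact blade_apply_delta _ _ _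



/-- Let `H` be a hypergraph with (nonempty) hyperedges
`E : Fin m → Finset (Fin n)` (pairwise distinct) and `j ≥ 0`, let `G_j` be the simple
graph on the hyperedge set of `H` in which two hyperedges are adjacent iff they
intersect in at least `j + 1` vertices, and let `Φ_{G_j}` be the zeon independent-set
representation of `G_j`.  Then for every `k ∈ ℕ`,
`Φ_{G_j}^k = k! Σ_S ζ_{N(S)} ⊗ ε_S`, the sum being over the `k`-element subsets `S` of
the hyperedge set that are `j`-intersecting matchings of `H` (`|e ∩ f| ≤ j` for distinct
`e, f ∈ S`), with `N(S)` the set of edges of `G_j''` incident with `S`; and the index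
sets of the nonzero `ε_S`-terms of `Φ_{G_j}^k` are exactly the `j`-intersecting
matchings of `H` on `k` hyperedges. -/
theorem j_intersecting_matching_enumeration {n m : ℕ} (E : Fin m → Finset (Fin n))
    (hE : ∀ l : Fin m, (E l).Nonempty) (hinj : Function.Injective E)
    (j k : ℕ) (E'' : Finset (Sym2 (Fin m)))
    (hE'' : E'' = Finset.univ.filter (fun e : Sym2 (Fin m) =>
      e ∈ (interGraph E j).edgeSet ∨
        ∃ a : Fin m, e = Sym2.diag a ∧ ∀ b : Fin m, ¬ (interGraph E j).Adj a b)) :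
    (PhiInd E'' ^ k =
      (Nat.factorial k) •
        ∑ S ∈ ((Finset.univ : Finset (Fin m)).powersetCard k).filter
            (fun S => ∀ a ∈ S, ∀ b ∈ S, a ≠ b → (E a ∩ E b).card ≤ j),
          zetaBlade (Sym2 (Fin m)) (Finset (Fin m))
              (E''.filter (fun e => ∃ w ∈ S, w ∈ e)) *
            epsBlade (Finset (Sym2 (Fin m))) (Fin m) S) ∧
    ∀ S : Finset (Fin m),
      ((∃ T : Finset (Sym2 (Fin m)),
          (PhiInd E'' ^ k)
            (fun p => if p = ((∅ : Finset (Sym2 (Fin m))), (∅ : Finset (Fin m)))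
              then (1 : ℝ) else 0) (T, S) ≠ 0) ↔
        (S.card = k ∧ ∀ a ∈ S, ∀ b ∈ S, a ≠ b → (E a ∩ E b).card ≤ j)) := by
  constructor
  · exact pow_formula hE'' k
  · intro S
    constructor
    · rintro ⟨T, hT⟩
      rw [eval_formula hE'' k T S] at hT
      have hsum : ∑ S₀ ∈ Mset E j k,
          (if (T, S) = (E''.filter (fun e => ∃ w ∈ S₀, w ∈ e), S₀) then (1:ℝ) else 0) ≠ 0 :=
        fun h => hT (by rw [h, mul_zero])
      obtain ⟨S₀, hS₀, hind⟩ := Finset.exists_ne_zero_of_sum_ne_zero hsum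
      have hSS₀ : S = S₀ := by
        by_contra hne
        exact hind (if_neg (fun h => hne (congrArg Prod.snd h)))
      subst hSS₀
      simp only [Mset, Finset.mem_filter, Finset.mem_powersetCard_univ] at hS₀
      exact hS₀
    · rintro ⟨hcard, hmatch⟩
      have hS : S ∈ Mset E j k := by
        simp only [Mset, Finset.mem_filter, Finset.mem_powersetCard_univ]
        exact ⟨hcard, hmatch⟩
      refine ⟨E''.filter (fun e => ∃ w ∈ S, w ∈ e), ?_⟩
      rw [eval_formula hE'' k _ S]
      have hsum : ∑ S₀ ∈ Mset E j k,
          (if ((E''.filter (fun e => ∃ w ∈ S, w ∈ e)), S) =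
            (E''.filter (fun e => ∃ w ∈ S₀, w ∈ e), S₀) then (1:ℝ) else 0) = 1 := by
        rw [Finset.sum_eq_single_of_mem S hS]
        · rw [if_pos rfl]
        · intro S₀ _ hne
          exact if_neg (fun h => hne (congrArg Prod.snd h).symm)
      rw [hsum, mul_one]
      exact Nat.cast_ne_zero.mpr (Nat.factorial_ne_zero k)
end Blades2
end
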